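/- For every integer n ≥ 1, the polynomial identity ∏_{i=1}^{n−1} (i+1 + q(n−i)) = Σ_{T ∈ 𝒜_n} ∏_{v internal vertex of T} (2 + q(h_v − 1)) holds, where the sum is over all André trees on n vertices. -/

import Mathlib

open scoped Classical

noncomputable section

def IsAndreTree (n : ℕ) (p : Fin n → Fin n) : Prop :=
  (∀ i : Fin n, (i : ℕ) + 1 < n → (i : ℕ) < (p i : ℕ)) ∧
  (∀ i : Fin n, ¬ (i : ℕ) + 1 < n → p i = i) ∧
  ∀ j : Fin n, (Finset.univ.filter fun i : Fin n => (i : ℕ) + 1 < n ∧ p i = j).card ≤ 2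

def andreTrees (n : ℕ) : Finset (Fin n → Fin n) :=
  Finset.univ.filter (IsAndreTree n)

def hookA (n : ℕ) (p : Fin n → Fin n) (v : Fin n) : ℕ :=
  (Finset.univ.filter fun w : Fin n => ∃ k < n, p^[k] w = v).card

def internalsA (n : ℕ) (p : Fin n → Fin n) : Finset (Fin n) :=
  Finset.univ.filter fun v => 1 < hookA n p v

end

namespace Stmt3

open Finset
open scoped Classical

noncomputable section

/-- A forest of decreasing (towards leaves) at-most-binary trees. Roots are fixed points. -/
def IsForest (m : ℕ) (p : Fin m → Fin m) : Prop :=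
  (∀ i : Fin m, (i : ℕ) ≤ (p i : ℕ)) ∧
  ∀ j : Fin m, (Finset.univ.filter fun i => p i = j ∧ i ≠ j).card ≤ 2

def forests (m : ℕ) : Finset (Fin m → Fin m) := Finset.univ.filter (IsForest m)

def rootsF {m : ℕ} (p : Fin m → Fin m) : Finset (Fin m) :=
  Finset.univ.filter fun i => p i = i

def Wt (q : ℚ) (m : ℕ) (p : Fin m → Fin m) : ℚ :=
  ∏ v ∈ internalsA m p, (2 + q * ((hookA m p v : ℚ) - 1))

/-- Falling factorial. -/
def ff : ℚ → ℕ → ℚ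
  | _, 0 => 1
  | x, k+1 => x * ff (x-1) k

def Psi (q : ℚ) (m : ℕ) (x : ℚ) : ℚ :=
  ∑ p ∈ forests m, Wt q m p * ff x (rootsF p).card

/-! ### falling factorial lemmas -/

lemma ff_zero (x : ℚ) : ff x 0 = 1 := rfl

lemma ff_succ (x : ℚ) (k : ℕ) : ff x (k+1) = x * ff (x-1) k := rfl

lemma ff_zero_succ (k : ℕ) : ff 0 (k+1) = 0 := by simp [ff]

lemma ff_succ' (k : ℕ) : ∀ x : ℚ, ff x (k+1) = ff x k * (x - k) := by
  induction k with
  | zero => intro x; simp [ff]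
  | succ k ih =>
    intro x
    rw [ff_succ, ih (x-1), ff_succ]
    push_cast
    ring

lemma ff_one_ge_two (k : ℕ) : ff 1 (k+2) = 0 := by
  rw [ff_succ]; norm_num [ff_zero_succ]

/-! ### reachability -/

variable {M : ℕ} {p : Fin M → Fin M}

def Reach (p : Fin M → Fin M) (w v : Fin M) : Prop := ∃ k, p^[k] w = v


lemma iter_chain (hp : ∀ i : Fin M, (i : ℕ) ≤ (p i : ℕ)) (w : Fin M) :
    ∀ j, (∀ i < j, p^[i+1] w ≠ p^[i] w) → j ≤ (p^[j] w : ℕ) := by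
  intro j
  induction j with
  | zero => intro _; simp
  | succ j ih =>
    intro hne
    have h1 : j ≤ (p^[j] w : ℕ) := ih (fun i hi => hne i (Nat.lt_succ_of_lt hi))
    have h2 : (p^[j+1] w : ℕ) = (p (p^[j] w) : ℕ) := by
      rw [Function.iterate_succ_apply']
    have h3 : (p^[j] w : ℕ) ≤ (p (p^[j] w) : ℕ) := hp _
    have h4 : p (p^[j] w) ≠ p^[j] w := by
      intro hfix
      exact hne j (Nat.lt_succ_self j) (by rw [Function.iterate_succ_apply', hfix])
    have h5 : (p^[j] w : ℕ) ≠ (p (p^[j] w) : ℕ) := fun he => h4 (Fin.ext he.symm)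
    omega

lemma reach_bound (hp : ∀ i : Fin M, (i : ℕ) ≤ (p i : ℕ)) {w v : Fin M}
    (h : Reach p w v) : ∃ k < M, p^[k] w = v := by
  classical
  set K := Nat.find h with hKdef
  have hK : p^[K] w = v := Nat.find_spec h
  have key : K ≤ (p^[K] w : ℕ) := by
    apply iter_chain hp
    intro i hi hfix
    have hfix' : p (p^[i] w) = p^[i] w := by
      rwa [Function.iterate_succ_apply'] at hfix
    have : p^[K] w = p^[i] w := by
      have e : p^[K] w = p^[K - i] (p^[i] w) := by
        rw [← Function.iterate_add_apply]; congr 1; omega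
      rw [e, Function.iterate_fixed hfix']
    exact Nat.find_min h hi (by rw [← this]; exact hK)
  exact ⟨K, lt_of_le_of_lt key (p^[K] w).isLt, hK⟩

lemma hookA_eq (hp : ∀ i : Fin M, (i : ℕ) ≤ (p i : ℕ)) (v : Fin M) :
    hookA M p v = (Finset.univ.filter fun w => Reach p w v).card := by
  unfold hookA
  congr 1
  apply Finset.filter_congr
  intro w _
  constructor
  · rintro ⟨k, _, hk⟩; exact ⟨k, hk⟩
  · intro h; exact reach_bound hp h

lemma exists_root_reach (hp : ∀ i : Fin M, (i : ℕ) ≤ (p i : ℕ)) (w : Fin M) :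
    ∃ c, p c = c ∧ Reach p w c := by
  by_contra hcon
  push_neg at hcon
  have : ∀ i < M, p^[i+1] w ≠ p^[i] w := by
    intro i _ hfix
    have hfix' : p (p^[i] w) = p^[i] w := by
      rwa [Function.iterate_succ_apply'] at hfix
    exact hcon (p^[i] w) hfix' ⟨i, rfl⟩
  have := iter_chain hp w M this
  exact absurd (p^[M] w).isLt (by omega)

lemma reach_root_eq (hp : ∀ i : Fin M, (i : ℕ) ≤ (p i : ℕ)) {w c c' : Fin M}
    (hc : p c = c) (hc' : p c' = c') (h : Reach p w c) (h' : Reach p w c') : c = c' := by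
  obtain ⟨k, hk⟩ := h
  obtain ⟨k', hk'⟩ := h'
  rcases le_total k k' with hle | hle
  · have : p^[k'] w = p^[k' - k] (p^[k] w) := by
      rw [← Function.iterate_add_apply]; congr 1; omega
    rw [hk, Function.iterate_fixed hc] at this
    rw [← hk', this]
  · have : p^[k] w = p^[k - k'] (p^[k'] w) := by
      rw [← Function.iterate_add_apply]; congr 1; omega
    rw [hk', Function.iterate_fixed hc'] at this
    rw [← hk, this]

lemma hookA_pos (v : Fin M) : 1 ≤ hookA M p v := by
  rw [Nat.one_le_iff_ne_zero, ← Nat.pos_iff_ne_zero]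
  apply Finset.card_pos.mpr
  exact ⟨v, Finset.mem_filter.mpr ⟨Finset.mem_univ v, 0, v.pos, rfl⟩⟩

lemma reach_root_iff_iterM (hp : ∀ i : Fin M, (i : ℕ) ≤ (p i : ℕ)) {c : Fin M}
    (hc : p c = c) (w : Fin M) : Reach p w c ↔ p^[M] w = c := by
  constructor
  · intro h
    obtain ⟨k, hk, hkeq⟩ := reach_bound hp h
    have : p^[M] w = p^[M - k] (p^[k] w) := by
      rw [← Function.iterate_add_apply]; congr 1; omega
    rw [hkeq, Function.iterate_fixed hc] at this
    exact this
  · intro h; exact ⟨M, h⟩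

lemma iterM_mem_roots (hp : ∀ i : Fin M, (i : ℕ) ≤ (p i : ℕ)) (w : Fin M) :
    p^[M] w ∈ rootsF p := by
  obtain ⟨c, hc, hr⟩ := exists_root_reach hp w
  have := (reach_root_iff_iterM hp hc w).mp hr
  rw [this]
  exact Finset.mem_filter.mpr ⟨Finset.mem_univ _, hc⟩

lemma sum_hook_roots (hp : ∀ i : Fin M, (i : ℕ) ≤ (p i : ℕ)) :
    ∑ c ∈ rootsF p, hookA M p c = M := by
  have h1 : ∀ c ∈ rootsF p, hookA M p c
      = (Finset.univ.filter fun w => p^[M] w = c).card := by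
    intro c hc
    have hcr : p c = c := (Finset.mem_filter.mp hc).2
    rw [hookA_eq hp]
    congr 1
    apply Finset.filter_congr
    intro w _
    exact reach_root_iff_iterM hp hcr w
  rw [Finset.sum_congr rfl h1]
  rw [← Finset.card_eq_sum_card_fiberwise (fun w _ => iterM_mem_roots hp w)]
  simp


/-! ### deletion of the top vertex -/

variable {m : ℕ}

def ins (p' : Fin m → Fin m) (C : Finset (Fin m)) : Fin (m+1) → Fin (m+1) :=
  fun i =>
    if h : i = Fin.last m then Fin.last m
    else if i.castPred h ∈ C then Fin.last m else (p' (i.castPred h)).castSucc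

def del (p : Fin (m+1) → Fin (m+1)) : Fin m → Fin m :=
  fun i => if h : p i.castSucc = Fin.last m then i else (p i.castSucc).castPred h

def childSet (p : Fin (m+1) → Fin (m+1)) : Finset (Fin m) :=
  Finset.univ.filter fun i => p i.castSucc = Fin.last m

@[simp] lemma ins_last (p' : Fin m → Fin m) (C : Finset (Fin m)) :
    ins p' C (Fin.last m) = Fin.last m := dif_pos rfl

lemma castSucc_ne_last (j : Fin m) : j.castSucc ≠ Fin.last m :=
  (Fin.castSucc_lt_last j).ne

@[simp] lemma ins_castSucc (p' : Fin m → Fin m) (C : Finset (Fin m)) (j : Fin m) :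
    ins p' C j.castSucc = if j ∈ C then Fin.last m else (p' j).castSucc := by
  rw [ins, dif_neg (castSucc_ne_last j)]
  simp
  exact if_congr Iff.rfl rfl rfl

lemma fin_succ_cases (i : Fin (m+1)) : i = Fin.last m ∨ ∃ j : Fin m, i = j.castSucc := by
  rcases Fin.eq_castSucc_or_eq_last i with ⟨j, hj⟩ | h
  · exact Or.inr ⟨j, hj⟩
  · exact Or.inl h

lemma forest_last_fixed {p : Fin (m+1) → Fin (m+1)} (hp : IsForest (m+1) p) :
    p (Fin.last m) = Fin.last m := by
  have := hp.1 (Fin.last m)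
  have h2 : (p (Fin.last m) : ℕ) ≤ m := by
    exact Nat.lt_succ_iff.mp (p (Fin.last m)).isLt
  apply Fin.ext
  simp only [Fin.val_last] at *
  omega

lemma del_mem_forests {p : Fin (m+1) → Fin (m+1)} (hp : p ∈ forests (m+1)) :
    del p ∈ forests m := by
  have hpf : IsForest (m+1) p := (Finset.mem_filter.mp hp).2
  refine Finset.mem_filter.mpr ⟨Finset.mem_univ _, ?_, ?_⟩
  · intro i
    rw [del]
    split
    · exact le_refl _
    · have := hpf.1 i.castSucc
      simpa using this
  · intro j
    have hle := hpf.2 j.castSucc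
    refine le_trans (Finset.card_le_card_of_injOn (fun i => i.castSucc) ?_ ?_) hle
    · intro i hi
      simp only [Finset.mem_coe, Finset.coe_filter, Set.mem_setOf_eq, Finset.mem_filter, Finset.mem_univ, true_and] at hi ⊢
      obtain ⟨h1, h2⟩ := hi
      rw [del] at h1
      rcases Classical.em (p i.castSucc = Fin.last m) with he | he
      · rw [dif_pos he] at h1; exact absurd h1 h2
      · rw [dif_neg he] at h1
        constructor
        · apply Fin.ext
          have : ((p i.castSucc).castPred he : ℕ) = (j : ℕ) := by rw [h1]
          simpa using this
        · intro hee
          exact h2 (Fin.castSucc_injective m hee)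
    · intro a _ b _ hab
      exact Fin.castSucc_injective m hab

lemma childSet_subset_roots {p : Fin (m+1) → Fin (m+1)} (hp : p ∈ forests (m+1)) :
    childSet p ⊆ rootsF (del p) := by
  intro i hi
  have h : p i.castSucc = Fin.last m := (Finset.mem_filter.mp hi).2
  exact Finset.mem_filter.mpr ⟨Finset.mem_univ _, dif_pos h⟩

lemma childSet_card_le {p : Fin (m+1) → Fin (m+1)} (hp : p ∈ forests (m+1)) :
    (childSet p).card ≤ 2 := by
  have hpf : IsForest (m+1) p := (Finset.mem_filter.mp hp).2
  have hle := hpf.2 (Fin.last m)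
  refine le_trans (Finset.card_le_card_of_injOn (fun i => i.castSucc) ?_ ?_) hle
  · intro i hi
    simp only [childSet, Finset.mem_coe, Finset.coe_filter, Set.mem_setOf_eq, Finset.mem_filter, Finset.mem_univ, true_and] at hi ⊢
    exact ⟨hi, castSucc_ne_last i⟩
  · intro a _ b _ hab
    exact Fin.castSucc_injective m hab

lemma ins_mem_forests {p' : Fin m → Fin m} (hp' : p' ∈ forests m)
    {C : Finset (Fin m)} (hC : C ⊆ rootsF p') (hC2 : C.card ≤ 2) :
    ins p' C ∈ forests (m+1) := by
  have hpf : IsForest m p' := (Finset.mem_filter.mp hp').2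
  refine Finset.mem_filter.mpr ⟨Finset.mem_univ _, ?_, ?_⟩
  · intro i
    rcases fin_succ_cases i with h | ⟨j, hj⟩
    · rw [h, ins_last]
    · subst hj
      rw [ins_castSucc]
      split
      · simp only [Fin.coe_castSucc, Fin.val_last]
        omega
      · simpa using hpf.1 j
  · intro J
    rcases fin_succ_cases J with h | ⟨j', hj'⟩
    · subst h
      have : (Finset.univ.filter fun i => ins p' C i = Fin.last m ∧ i ≠ Fin.last m)
          = C.map ⟨Fin.castSucc, Fin.castSucc_injective m⟩ := by
        ext i
        simp only [Finset.mem_filter, Finset.mem_univ, true_and, Finset.mem_map,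
          Function.Embedding.coeFn_mk]
        constructor
        · rintro ⟨h1, h2⟩
          rcases fin_succ_cases i with h | ⟨j, hj⟩
          · exact absurd h h2
          · subst hj
            rw [ins_castSucc] at h1
            refine ⟨j, ?_, rfl⟩
            by_contra hjc
            rw [if_neg hjc] at h1
            exact castSucc_ne_last _ h1
        · rintro ⟨j, hjC, rfl⟩
          rw [ins_castSucc, if_pos hjC]
          exact ⟨rfl, castSucc_ne_last j⟩
      rw [this, Finset.card_map]
      exact hC2
    · subst hj'
      have hle := hpf.2 j'
      refine le_trans (Finset.card_le_card_of_injOn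
        (fun i => if h : i = Fin.last m then j' else i.castPred h) ?_ ?_) hle
      · intro i hi
        simp only [Finset.mem_coe, Finset.coe_filter, Set.mem_setOf_eq, Finset.mem_filter, Finset.mem_univ, true_and] at hi ⊢
        obtain ⟨h1, h2⟩ := hi
        rcases fin_succ_cases i with h | ⟨j, hj⟩
        · rw [h, ins_last] at h1
          exact absurd h1.symm (castSucc_ne_last j')
        · subst hj
          rw [ins_castSucc] at h1
          rcases Classical.em (j ∈ C) with hjC | hjC
          · rw [if_pos hjC] at h1
            exact absurd h1.symm (castSucc_ne_last j')
          · rw [if_neg hjC] at h1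
            have hpj : p' j = j' := Fin.castSucc_injective m h1
            rw [dif_neg (castSucc_ne_last j)]
            simp only [Fin.castPred_castSucc]
            exact ⟨hpj, fun he => h2 (by rw [he])⟩
      · intro a ha b hb hab
        simp only [Finset.coe_filter, Set.mem_setOf_eq, Finset.mem_univ, true_and] at ha hb
        have hna : a ≠ Fin.last m := by
          rcases fin_succ_cases a with h | ⟨j, hj⟩
          · rw [h, ins_last] at ha
            exact absurd ha.1.symm (castSucc_ne_last j')
          · subst hj; exact castSucc_ne_last j
        have hnb : b ≠ Fin.last m := by
          rcases fin_succ_cases b with h | ⟨j, hj⟩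
          · rw [h, ins_last] at hb
            exact absurd hb.1.symm (castSucc_ne_last j')
          · subst hj; exact castSucc_ne_last j
        simp only [] at hab
        rw [dif_neg hna, dif_neg hnb] at hab
        apply Fin.ext
        have : ((a.castPred hna : Fin m) : ℕ) = ((b.castPred hnb : Fin m) : ℕ) := by rw [hab]
        simpa using this

lemma del_ins {p' : Fin m → Fin m} (hp' : p' ∈ forests m)
    {C : Finset (Fin m)} (hC : C ⊆ rootsF p') : del (ins p' C) = p' := by
  funext i
  have hroot : ∀ c ∈ C, p' c = c := fun c hc => (Finset.mem_filter.mp (hC hc)).2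
  by_cases hi : i ∈ C
  · rw [del]
    rw [dif_pos (by rw [ins_castSucc, if_pos hi])]
    exact (hroot i hi).symm
  · rw [del]
    rw [dif_neg (by rw [ins_castSucc, if_neg hi]; exact castSucc_ne_last _)]
    simp [ins_castSucc, hi]

lemma childSet_ins {p' : Fin m → Fin m}
    {C : Finset (Fin m)} : childSet (ins p' C) = C := by
  ext i
  simp only [childSet, Finset.mem_filter, Finset.mem_univ, true_and, ins_castSucc]
  by_cases hi : i ∈ C
  · simp [hi]
  · simp [hi, castSucc_ne_last]

lemma ins_del {p : Fin (m+1) → Fin (m+1)} (hp : p ∈ forests (m+1)) :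
    ins (del p) (childSet p) = p := by
  have hpf : IsForest (m+1) p := (Finset.mem_filter.mp hp).2
  funext i
  rcases fin_succ_cases i with h | ⟨j, hj⟩
  · rw [h, ins_last, forest_last_fixed hpf]
  · subst hj
    rw [ins_castSucc]
    by_cases hc : j ∈ childSet p
    · rw [if_pos hc]
      exact ((Finset.mem_filter.mp hc).2).symm
    · rw [if_neg hc]
      have hne : p j.castSucc ≠ Fin.last m := by
        intro he
        exact hc (Finset.mem_filter.mpr ⟨Finset.mem_univ _, he⟩)
      rw [del, dif_neg hne]
      simp

/-! ### hook transfer under insertion -/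

section Transfer

variable {p' : Fin m → Fin m} {C : Finset (Fin m)}

def csEmb (m : ℕ) : Fin m ↪ Fin (m+1) := ⟨Fin.castSucc, Fin.castSucc_injective m⟩

lemma ins_path (hroot : ∀ c ∈ C, p' c = c) (w : Fin m) :
    ∀ k, (∀ j < k, p'^[j] w ∉ C) →
      (ins p' C)^[k] w.castSucc = (p'^[k] w).castSucc := by
  intro k
  induction k with
  | zero => intro _; rfl
  | succ k ih =>
    intro hk
    rw [Function.iterate_succ_apply', ih (fun j hj => hk j (Nat.lt_succ_of_lt hj)),
      ins_castSucc, if_neg (hk k (Nat.lt_succ_self k)), Function.iterate_succ_apply' p' k w]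

lemma reach_ins_castSucc_iff (hroot : ∀ c ∈ C, p' c = c) (w v : Fin m) :
    Reach (ins p' C) w.castSucc v.castSucc ↔ Reach p' w v := by
  constructor
  · rintro ⟨k, hk⟩
    by_cases hC : ∃ j, j < k ∧ p'^[j] w ∈ C
    · classical
      set j₀ := Nat.find hC with hj₀def
      obtain ⟨hj₀k, hj₀C⟩ := Nat.find_spec hC
      have hmin : ∀ i < j₀, p'^[i] w ∉ C := by
        intro i hi hiC
        exact Nat.find_min hC hi ⟨lt_trans hi hj₀k, hiC⟩
      have hpath := ins_path hroot w j₀ hmin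
      -- k must be ≤ j₀, else iterate is stuck at last
      rcases le_or_gt k j₀ with hk0 | hk0
      · have := ins_path hroot w k (fun j hj => hmin j (lt_of_lt_of_le hj hk0))
        rw [this] at hk
        exact ⟨k, Fin.castSucc_injective m hk⟩
      · exfalso
        have hstep : (ins p' C)^[j₀+1] w.castSucc = Fin.last m := by
          rw [Function.iterate_succ_apply', hpath, ins_castSucc, if_pos hj₀C]
        have hstuck : (ins p' C)^[k] w.castSucc = Fin.last m := by
          have : (ins p' C)^[k] w.castSucc
              = (ins p' C)^[k - (j₀+1)] ((ins p' C)^[j₀+1] w.castSucc) := by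
            rw [← Function.iterate_add_apply]; congr 1; omega
          rw [this, hstep, Function.iterate_fixed (ins_last p' C)]
        rw [hstuck] at hk
        exact castSucc_ne_last v hk.symm
    · push_neg at hC
      have := ins_path hroot w k hC
      rw [this] at hk
      exact ⟨k, Fin.castSucc_injective m hk⟩
  · rintro ⟨k, hk⟩
    by_cases hC : ∃ j, j < k ∧ p'^[j] w ∈ C
    · classical
      set j₀ := Nat.find hC with hj₀def
      obtain ⟨hj₀k, hj₀C⟩ := Nat.find_spec hC
      have hmin : ∀ i < j₀, p'^[i] w ∉ C := by
        intro i hi hiC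
        exact Nat.find_min hC hi ⟨lt_trans hi hj₀k, hiC⟩
      have hcfix : p' (p'^[j₀] w) = p'^[j₀] w := hroot _ hj₀C
      have hv : v = p'^[j₀] w := by
        have : p'^[k] w = p'^[k - j₀] (p'^[j₀] w) := by
          rw [← Function.iterate_add_apply]; congr 1; omega
        rw [Function.iterate_fixed hcfix] at this
        rw [← hk, this]
      refine ⟨j₀, ?_⟩
      rw [ins_path hroot w j₀ hmin, hv]
    · push_neg at hC
      exact ⟨k, by rw [ins_path hroot w k hC, hk]⟩

lemma reach_ins_last_iff (hroot : ∀ c ∈ C, p' c = c) (w : Fin m) :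
    Reach (ins p' C) w.castSucc (Fin.last m) ↔ ∃ c ∈ C, Reach p' w c := by
  constructor
  · rintro ⟨k, hk⟩
    by_cases hC : ∃ j, j < k ∧ p'^[j] w ∈ C
    · obtain ⟨j, _, hjC⟩ := hC
      exact ⟨p'^[j] w, hjC, ⟨j, rfl⟩⟩
    · push_neg at hC
      rw [ins_path hroot w k hC] at hk
      exact absurd hk (castSucc_ne_last _)
  · rintro ⟨c, hcC, hr⟩
    have := (reach_ins_castSucc_iff hroot w c).mpr hr
    obtain ⟨k, hk⟩ := this
    refine ⟨k+1, ?_⟩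
    rw [Function.iterate_succ_apply', hk, ins_castSucc, if_pos hcC]

lemma reach_ins_last_self : Reach (ins p' C) (Fin.last m) v → v = Fin.last m := by
  rintro ⟨k, hk⟩
  rw [Function.iterate_fixed (ins_last p' C)] at hk
  exact hk.symm

lemma hook_ins_castSucc (hp' : p' ∈ forests m) (hC : C ⊆ rootsF p')
    (hC2 : C.card ≤ 2) (v : Fin m) :
    hookA (m+1) (ins p' C) v.castSucc = hookA m p' v := by
  have hroot : ∀ c ∈ C, p' c = c := fun c hc => (Finset.mem_filter.mp (hC hc)).2
  have hPf : IsForest (m+1) (ins p' C) :=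
    (Finset.mem_filter.mp (ins_mem_forests hp' hC hC2)).2
  have hp'f : IsForest m p' := (Finset.mem_filter.mp hp').2
  rw [hookA_eq hPf.1, hookA_eq hp'f.1]
  have : (Finset.univ.filter fun W => Reach (ins p' C) W v.castSucc)
      = (Finset.univ.filter fun w => Reach p' w v).map (csEmb m) := by
    ext W
    simp only [Finset.mem_filter, Finset.mem_univ, true_and, Finset.mem_map, csEmb,
      Function.Embedding.coeFn_mk]
    constructor
    · intro h
      rcases fin_succ_cases W with hW | ⟨w, hW⟩
      · exfalso
        subst hW
        exact castSucc_ne_last v (reach_ins_last_self h)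
      · subst hW
        exact ⟨w, (reach_ins_castSucc_iff hroot w v).mp h, rfl⟩
    · rintro ⟨w, hw, rfl⟩
      exact (reach_ins_castSucc_iff hroot w v).mpr hw
  rw [this, Finset.card_map]

lemma hook_ins_last (hp' : p' ∈ forests m) (hC : C ⊆ rootsF p')
    (hC2 : C.card ≤ 2) :
    hookA (m+1) (ins p' C) (Fin.last m) = 1 + ∑ c ∈ C, hookA m p' c := by
  have hroot : ∀ c ∈ C, p' c = c := fun c hc => (Finset.mem_filter.mp (hC hc)).2
  have hPf : IsForest (m+1) (ins p' C) :=
    (Finset.mem_filter.mp (ins_mem_forests hp' hC hC2)).2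
  have hp'f : IsForest m p' := (Finset.mem_filter.mp hp').2
  rw [hookA_eq hPf.1]
  have hset : (Finset.univ.filter fun W => Reach (ins p' C) W (Fin.last m))
      = insert (Fin.last m)
          ((C.biUnion fun c => Finset.univ.filter fun w => Reach p' w c).map (csEmb m)) := by
    ext W
    simp only [Finset.mem_filter, Finset.mem_univ, true_and, Finset.mem_insert,
      Finset.mem_map, Finset.mem_biUnion, csEmb, Function.Embedding.coeFn_mk]
    constructor
    · intro h
      rcases fin_succ_cases W with hW | ⟨w, hW⟩
      · exact Or.inl hW
      · subst hW
        obtain ⟨c, hcC, hr⟩ := (reach_ins_last_iff hroot w).mp h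
        exact Or.inr ⟨w, ⟨c, hcC, hr⟩, rfl⟩
    · rintro (rfl | ⟨w, ⟨c, hcC, hr⟩, rfl⟩)
      · exact ⟨0, rfl⟩
      · exact (reach_ins_last_iff hroot w).mpr ⟨c, hcC, hr⟩
  have hnot : Fin.last m ∉
      ((C.biUnion fun c => Finset.univ.filter fun w => Reach p' w c).map (csEmb m)) := by
    simp only [Finset.mem_map, csEmb, Function.Embedding.coeFn_mk]
    rintro ⟨w, _, hw⟩
    exact castSucc_ne_last w hw
  have hdisj : ∀ c ∈ C, ∀ c' ∈ C, c ≠ c' → Disjoint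
      (Finset.univ.filter fun w => Reach p' w c)
      (Finset.univ.filter fun w => Reach p' w c') := by
    intro c hcC c' hc'C hne
    simp only [Finset.disjoint_left, Finset.mem_filter, Finset.mem_univ, true_and]
    intro w hw hw'
    exact hne (reach_root_eq hp'f.1 (hroot c hcC) (hroot c' hc'C) hw hw')
  rw [hset, Finset.card_insert_of_notMem hnot, Finset.card_map,
    Finset.card_biUnion hdisj, Nat.add_comm]
  congr 1
  apply Finset.sum_congr rfl
  intro c hc
  rw [hookA_eq hp'f.1]

lemma roots_ins (hC : C ⊆ rootsF p') :
    rootsF (ins p' C) = insert (Fin.last m) ((rootsF p' \ C).map (csEmb m)) := by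
  ext i
  simp only [rootsF, Finset.mem_filter, Finset.mem_univ, true_and, Finset.mem_insert,
    Finset.mem_map, Finset.mem_sdiff, csEmb, Function.Embedding.coeFn_mk]
  rcases fin_succ_cases i with hi | ⟨j, hj⟩
  · subst hi
    simp [ins_last]
  · subst hj
    rw [ins_castSucc]
    constructor
    · intro h
      by_cases hjC : j ∈ C
      · rw [if_pos hjC] at h
        exact absurd h.symm (castSucc_ne_last j)
      · rw [if_neg hjC] at h
        exact Or.inr ⟨j, ⟨Fin.castSucc_injective m h, hjC⟩, rfl⟩
    · rintro (h | ⟨w, ⟨hw1, hw2⟩, hw3⟩)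
      · exact absurd h (castSucc_ne_last j)
      · have : w = j := Fin.castSucc_injective m hw3
        subst this
        rw [if_neg hw2, hw1]

lemma roots_ins_card (hC : C ⊆ rootsF p') :
    (rootsF (ins p' C)).card = ((rootsF p').card - C.card) + 1 := by
  rw [roots_ins hC, Finset.card_insert_of_notMem, Finset.card_map,
    Finset.card_sdiff_of_subset hC]
  simp only [Finset.mem_map, csEmb, Function.Embedding.coeFn_mk]
  rintro ⟨w, _, hw⟩
  exact castSucc_ne_last w hw

end Transfer

section Transfer2

variable {p' : Fin m → Fin m} {C : Finset (Fin m)}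

lemma internals_ins (hp' : p' ∈ forests m) (hC : C ⊆ rootsF p') (hC2 : C.card ≤ 2) :
    internalsA (m+1) (ins p' C)
      = ((internalsA m p').map (csEmb m)) ∪ (if C.Nonempty then {Fin.last m} else ∅) := by
  ext i
  simp only [internalsA, Finset.mem_filter, Finset.mem_univ, true_and, Finset.mem_union,
    Finset.mem_map, csEmb, Function.Embedding.coeFn_mk]
  rcases fin_succ_cases i with hi | ⟨j, hj⟩
  · subst hi
    rw [hook_ins_last hp' hC hC2]
    constructor
    · intro h
      have hne : C.Nonempty := by
        by_contra hne
        rw [Finset.not_nonempty_iff_eq_empty] at hne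
        subst hne
        simp at h
      rw [if_pos hne]
      exact Or.inr (Finset.mem_singleton_self _)
    · intro h
      rcases h with ⟨w, _, hw⟩ | h
      · exact absurd hw (castSucc_ne_last w)
      · have hne : C.Nonempty := by
          by_contra hc
          rw [Finset.not_nonempty_iff_eq_empty] at hc
          subst hc
          simp at h
        obtain ⟨c, hcC⟩ := hne
        have : 1 ≤ ∑ c ∈ C, hookA m p' c :=
          le_trans (hookA_pos c) (Finset.single_le_sum (fun c _ => Nat.zero_le _) hcC)
        omega
  · subst hj
    rw [hook_ins_castSucc hp' hC hC2]
    constructor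
    · intro h
      exact Or.inl ⟨j, h, rfl⟩
    · intro h
      rcases h with ⟨w, hw, hww⟩ | h
      · have : w = j := Fin.castSucc_injective m hww
        subst this
        exact hw
      · exfalso
        rcases Classical.em C.Nonempty with hne | hne
        · rw [if_pos hne, Finset.mem_singleton] at h
          exact castSucc_ne_last j h
        · rw [if_neg hne] at h
          simp at h

lemma Wt_ins (q : ℚ) (hp' : p' ∈ forests m) (hC : C ⊆ rootsF p') (hC2 : C.card ≤ 2) :
    Wt q (m+1) (ins p' C)
      = Wt q m p' * (if C.Nonempty then 2 + q * ((∑ c ∈ C, hookA m p' c : ℕ) : ℚ) else 1) := by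
  rw [Wt, internals_ins hp' hC hC2, Finset.prod_union]
  · congr 1
    · rw [Finset.prod_map]
      apply Finset.prod_congr rfl
      intro v _
      simp only [csEmb, Function.Embedding.coeFn_mk]
      rw [hook_ins_castSucc hp' hC hC2]
    · rcases Classical.em C.Nonempty with hne | hne
      · rw [if_pos hne, if_pos hne, Finset.prod_singleton, hook_ins_last hp' hC hC2]
        push_cast
        ring
      · rw [if_neg hne, if_neg hne, Finset.prod_empty]
  · rcases Classical.em C.Nonempty with hne | hne
    · rw [if_pos hne]
      simp only [Finset.disjoint_right, Finset.mem_singleton, Finset.mem_map, csEmb,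
        Function.Embedding.coeFn_mk]
      rintro a rfl ⟨w, _, hw⟩
      exact castSucc_ne_last w hw
    · rw [if_neg hne]
      exact Finset.disjoint_empty_right _

lemma sum_forests_succ (F : (Fin (m+1) → Fin (m+1)) → ℚ) :
    ∑ p ∈ forests (m+1), F p
      = ∑ p' ∈ forests m, ∑ C ∈ (rootsF p').powerset.filter (fun C => C.card ≤ 2),
          F (ins p' C) := by
  rw [Finset.sum_sigma' (forests m)
    (fun p' => (rootsF p').powerset.filter (fun C => C.card ≤ 2))
    (fun p' C => F (ins p' C))]
  refine Finset.sum_bij' (i := fun p (_ : p ∈ forests (m+1)) =>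
      (⟨del p, childSet p⟩ : Σ _ : Fin m → Fin m, Finset (Fin m)))
    (j := fun s _ => ins s.1 s.2) ?_ ?_ ?_ ?_ ?_
  · intro p hp
    refine Finset.mem_sigma.mpr ⟨del_mem_forests hp, ?_⟩
    exact Finset.mem_filter.mpr ⟨Finset.mem_powerset.mpr (childSet_subset_roots hp),
      childSet_card_le hp⟩
  · rintro ⟨p', C⟩ hs
    rw [Finset.mem_sigma] at hs
    obtain ⟨h1, h2⟩ := hs
    rw [Finset.mem_filter] at h2
    exact ins_mem_forests h1 (Finset.mem_powerset.mp h2.1) h2.2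
  · intro p hp
    exact ins_del hp
  · rintro ⟨p', C⟩ hs
    rw [Finset.mem_sigma] at hs
    obtain ⟨h1, h2⟩ := hs
    rw [Finset.mem_filter] at h2
    have e1 := del_ins h1 (Finset.mem_powerset.mp h2.1)
    have e2 : childSet (ins p' C) = C := childSet_ins
    exact Sigma.ext e1 (heq_of_eq e2)
  · intro p hp
    rw [ins_del hp]

end Transfer2

/-! ### inner sum computation -/

section Inner

variable {α : Type*} [DecidableEq α]

lemma count_pairs (s : Finset α) (c : α) (hc : c ∈ s) :
    ((s.powersetCard 2).filter (fun C => c ∈ C)).card = s.card - 1 := by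
  rw [← Finset.card_erase_of_mem hc]
  symm
  apply Finset.card_bij (i := fun a (_ : a ∈ s.erase c) => insert a ({c} : Finset α))
  · intro a ha
    obtain ⟨hane, has⟩ := Finset.mem_erase.mp ha
    refine Finset.mem_filter.mpr ⟨Finset.mem_powersetCard.mpr ⟨?_, ?_⟩, ?_⟩
    · intro x hx
      rcases Finset.mem_insert.mp hx with rfl | hx
      · exact has
      · rw [Finset.mem_singleton.mp hx]; exact hc
    · rw [Finset.card_insert_of_notMem (by simp [hane]), Finset.card_singleton]
    · exact Finset.mem_insert.mpr (Or.inr (Finset.mem_singleton_self c))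
  · intro a ha b hb hab
    have hane := (Finset.mem_erase.mp ha).1
    have : a ∈ insert b ({c} : Finset α) := by
      rw [← hab]; exact Finset.mem_insert_self a _
    rcases Finset.mem_insert.mp this with h | h
    · exact h
    · exact absurd (Finset.mem_singleton.mp h) hane
  · intro C hC
    obtain ⟨hCs, hcC⟩ := Finset.mem_filter.mp hC
    obtain ⟨hsub, hcard⟩ := Finset.mem_powersetCard.mp hCs
    have h1 : (C.erase c).card = 1 := by
      rw [Finset.card_erase_of_mem hcC, hcard]
    obtain ⟨b, hb⟩ := Finset.card_eq_one.mp h1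
    have hbC : b ∈ C.erase c := by rw [hb]; exact Finset.mem_singleton_self b
    obtain ⟨hbne, hbCmem⟩ := Finset.mem_erase.mp hbC
    refine ⟨b, Finset.mem_erase.mpr ⟨hbne, hsub hbCmem⟩, ?_⟩
    have : C = insert c (C.erase c) := (Finset.insert_erase hcC).symm
    rw [this, hb]
    ext x
    simp only [Finset.mem_insert, Finset.mem_singleton]
    tauto

lemma sum_pairs (s : Finset α) (h : α → ℚ) :
    ∑ C ∈ s.powersetCard 2, ∑ c ∈ C, h c = ((s.card - 1 : ℕ) : ℚ) * ∑ c ∈ s, h c := by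
  have step1 : ∀ C ∈ s.powersetCard 2, ∑ c ∈ C, h c = ∑ c ∈ s, if c ∈ C then h c else 0 := by
    intro C hC
    have hsub := (Finset.mem_powersetCard.mp hC).1
    rw [Finset.sum_ite_mem]
    congr 1
    exact (Finset.inter_eq_right.mpr hsub).symm
  rw [Finset.sum_congr rfl step1, Finset.sum_comm]
  have step2 : ∀ c ∈ s, (∑ C ∈ s.powersetCard 2, if c ∈ C then h c else 0)
      = ((s.card - 1 : ℕ) : ℚ) * h c := by
    intro c hc
    rw [← Finset.sum_filter, Finset.sum_const, count_pairs s c hc, nsmul_eq_mul]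
  rw [Finset.sum_congr rfl step2, ← Finset.mul_sum]

lemma powersetCard_disj {α : Type*} {s : Finset α} {k l : ℕ} (hkl : k ≠ l) :
    Disjoint (s.powersetCard k) (s.powersetCard l) := by
  rw [Finset.disjoint_left]
  intro C hk hl
  exact hkl ((Finset.mem_powersetCard.mp hk).2.symm.trans (Finset.mem_powersetCard.mp hl).2)

lemma choose_two_cast (r : ℕ) : (((r+1).choose 2 : ℕ) : ℚ) * 2 = ((r:ℚ) + 1) * r := by
  have h : (r+1).choose 2 * 2 = (r+1) * r := by
    rw [Nat.choose_two_right]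
    simp only [Nat.add_sub_cancel]
    rw [Nat.div_mul_cancel]
    rcases Nat.even_or_odd r with he | ho
    · exact Dvd.dvd.mul_left he.two_dvd _
    · exact Dvd.dvd.mul_right (Odd.add_one ho).two_dvd _
  have := congrArg (fun n : ℕ => (n : ℚ)) h
  push_cast at this
  push_cast
  linarith

lemma inner_sum {α : Type*} [DecidableEq α] (q : ℚ) (s : Finset α) (h : α → ℚ) (r : ℕ)
    (hcard : s.card = r + 1) (x : ℚ) :
    ∑ C ∈ s.powerset.filter (fun C => C.card ≤ 2),
        (if C.Nonempty then 2 + q * (∑ c ∈ C, h c) else 1) * ff x (r + 2 - C.card)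
      = x * (x + 1 + q * (∑ c ∈ s, h c)) * ff x r := by
  set M := ∑ c ∈ s, h c with hM
  have hsplit : s.powerset.filter (fun C => C.card ≤ 2)
      = (s.powersetCard 0 ∪ s.powersetCard 1) ∪ s.powersetCard 2 := by
    ext C
    simp only [Finset.mem_filter, Finset.mem_powerset, Finset.mem_union,
      Finset.mem_powersetCard]
    constructor
    · rintro ⟨h1, h2⟩
      have : C.card = 0 ∨ C.card = 1 ∨ C.card = 2 := by omega
      tauto
    · rintro ((⟨h1, h2⟩ | ⟨h1, h2⟩) | ⟨h1, h2⟩) <;> exact ⟨h1, by omega⟩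
  rw [hsplit, Finset.sum_union, Finset.sum_union (powersetCard_disj (by norm_num))]
  · rw [Finset.powersetCard_zero, Finset.powersetCard_one]
    rw [Finset.sum_singleton, Finset.sum_map]
    simp only [Finset.not_nonempty_empty, if_false, Finset.card_empty, Nat.sub_zero,
      Function.Embedding.coeFn_mk, Finset.singleton_nonempty, if_true,
      Finset.sum_singleton, Finset.card_singleton]
    have e1 : ∑ c ∈ s, (2 + q * h c) * ff x (r + 2 - 1) = (2*((r:ℚ)+1) + q * M) * ff x (r+1) := by
      have : r + 2 - 1 = r + 1 := by omega
      rw [this, ← Finset.sum_mul, Finset.sum_add_distrib, Finset.sum_const, hcard,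
        ← Finset.mul_sum]
      push_cast
      ring_nf
      rw [hM]
      ring
    rw [e1]
    have e2 : ∑ C ∈ s.powersetCard 2,
        (if C.Nonempty then 2 + q * (∑ c ∈ C, h c) else 1) * ff x (r + 2 - C.card)
        = (((r:ℚ)+1)*r + q * (r * M)) * ff x r := by
      have hterm : ∀ C ∈ s.powersetCard 2,
          (if C.Nonempty then 2 + q * (∑ c ∈ C, h c) else 1) * ff x (r + 2 - C.card)
          = (2 + q * (∑ c ∈ C, h c)) * ff x r := by
        intro C hC
        obtain ⟨_, hc2⟩ := Finset.mem_powersetCard.mp hC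
        rw [if_pos (Finset.card_pos.mp (by omega)), hc2]
        norm_num
      rw [Finset.sum_congr rfl hterm, ← Finset.sum_mul]
      congr 1
      have h2 : r + 1 - 1 = r := by omega
      rw [Finset.sum_add_distrib, Finset.sum_const, ← Finset.mul_sum, sum_pairs s h,
        Finset.card_powersetCard, hcard, h2, nsmul_eq_mul]
      have hcc := choose_two_cast r
      push_cast at hcc ⊢
      linarith
    rw [e2]
    have f2 : ff x (r+2) = ff x r * (x - r) * (x - (r+1)) := by
      have a1 : ff x (r+1) = ff x r * (x - r) := ff_succ' r x
      have a2 : ff x (r+2) = ff x (r+1) * (x - (r+1)) := by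
        have := ff_succ' (r+1) x
        rw [this]
        push_cast
        ring_nf
      rw [a2, a1]
    have f1 : ff x (r+1) = ff x r * (x - r) := ff_succ' r x
    rw [f2, f1]
    ring
  · rw [Finset.disjoint_union_left]
    exact ⟨powersetCard_disj (by norm_num), powersetCard_disj (by norm_num)⟩

end Inner

/-! ### the recursion and the closed form -/

lemma roots_nonempty {m : ℕ} (hm : 1 ≤ m) {p : Fin m → Fin m} (hp : p ∈ forests m) :
    1 ≤ (rootsF p).card := by
  have hpf : IsForest m p := (Finset.mem_filter.mp hp).2
  have := iterM_mem_roots hpf.1 ⟨0, hm⟩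
  exact Finset.card_pos.mpr ⟨_, this⟩

lemma rec_step (q : ℚ) (m : ℕ) (hm : 1 ≤ m) (x : ℚ) :
    (x + 1) * Psi q (m+1) x = x * (x + 1 + q * m) * Psi q m (x+1) := by
  rw [Psi, sum_forests_succ (fun p => Wt q (m+1) p * ff x (rootsF p).card),
    Psi, Finset.mul_sum, Finset.mul_sum]
  apply Finset.sum_congr rfl
  intro p' hp'
  have hpf' : IsForest m p' := (Finset.mem_filter.mp hp').2
  obtain ⟨r, hr⟩ : ∃ r, (rootsF p').card = r + 1 := by
    have := roots_nonempty hm hp'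
    exact ⟨(rootsF p').card - 1, by omega⟩
  have hterm : ∀ C ∈ (rootsF p').powerset.filter (fun C => C.card ≤ 2),
      Wt q (m+1) (ins p' C) * ff x (rootsF (ins p' C)).card
      = Wt q m p' * ((if C.Nonempty then 2 + q * (∑ c ∈ C, (hookA m p' c : ℚ)) else 1)
          * ff x (r + 2 - C.card)) := by
    intro C hC
    obtain ⟨hC1, hC2⟩ := Finset.mem_filter.mp hC
    have hCsub := Finset.mem_powerset.mp hC1
    have hCcard : C.card ≤ r + 1 := hr ▸ Finset.card_le_card hCsub
    rw [Wt_ins q hp' hCsub hC2, roots_ins_card hCsub, hr]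
    have hexp : r + 1 - C.card + 1 = r + 2 - C.card := by omega
    rw [hexp]
    have hcast : ((∑ c ∈ C, hookA m p' c : ℕ) : ℚ) = ∑ c ∈ C, (hookA m p' c : ℚ) := by
      push_cast
      rfl
    rw [hcast]
    ring
  rw [Finset.sum_congr rfl hterm, ← Finset.mul_sum,
    inner_sum q (rootsF p') (fun c => (hookA m p' c : ℚ)) r hr x]
  have hMm : (∑ c ∈ rootsF p', (hookA m p' c : ℚ)) = (m : ℚ) := by
    rw [← Nat.cast_sum]
    exact_mod_cast congrArg (fun n : ℕ => (n : ℚ)) (sum_hook_roots hpf'.1)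
  rw [hMm, hr]
  have hffe : ff (x+1) (r+1) = (x+1) * ff x r := by
    rw [ff_succ]
    norm_num
  rw [hffe]
  ring

lemma psi_one (q : ℚ) (x : ℚ) : Psi q 1 x = x := by
  have huniv : (Finset.univ : Finset (Fin 1 → Fin 1)) = {fun _ => 0} := by
    apply Finset.eq_singleton_iff_unique_mem.mpr
    refine ⟨Finset.mem_univ _, fun p _ => ?_⟩
    funext i
    exact Subsingleton.elim _ _
  have hforests : forests 1 = {fun _ => 0} := by
    rw [forests, huniv]
    apply Finset.filter_true_of_mem
    intro p hp
    constructor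
    · intro i
      have : p i = i := Subsingleton.elim _ _
      rw [this]
    · intro j
      exact le_trans (Finset.card_filter_le _ _) (by simp)
  rw [Psi, hforests, Finset.sum_singleton]
  have hW : Wt q 1 (fun _ => 0) = 1 := by
    rw [Wt]
    have : internalsA 1 (fun _ => 0) = ∅ := by
      apply Finset.filter_eq_empty_iff.mpr
      intro v _
      have : hookA 1 (fun _ => 0) v ≤ 1 := by
        rw [hookA]
        exact le_trans (Finset.card_filter_le _ _) (by simp)
      omega
    rw [this, Finset.prod_empty]
  have hr : (rootsF (fun _ => (0 : Fin 1))).card = 1 := by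
    rw [rootsF]
    have : (Finset.univ.filter fun i : Fin 1 => (0 : Fin 1) = i) = Finset.univ := by
      apply Finset.filter_true_of_mem
      intro i _
      exact Subsingleton.elim _ _
    rw [this]
    simp
  rw [hW, hr, one_mul, ff_succ, ff_zero, mul_one]

lemma main_closed (q : ℚ) : ∀ m : ℕ, 1 ≤ m → ∀ x : ℚ, 0 < x →
    Psi q m x = x * ∏ i ∈ Finset.Icc 1 (m - 1), ((i : ℚ) + x + q * ((m : ℚ) - (i : ℚ))) := by
  intro m hm
  induction m, hm using Nat.le_induction with
  | base =>
    intro x _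
    rw [psi_one]
    have : Finset.Icc 1 (1 - 1) = (∅ : Finset ℕ) := by
      apply Finset.Icc_eq_empty
      omega
    rw [this, Finset.prod_empty, mul_one]
  | succ m hm ih =>
    intro x hx
    have hx1 : (0 : ℚ) < x + 1 := by linarith
    have hrec := rec_step q m hm x
    rw [ih (x+1) hx1] at hrec
    have hne : (x + 1) ≠ 0 := by linarith
    -- reindex the product
    have hre : ∏ i ∈ Finset.Icc 1 (m - 1), ((i : ℚ) + (x+1) + q * ((m : ℚ) - (i : ℚ)))
        = ∏ i ∈ Finset.Icc 2 m, ((i : ℚ) + x + q * (((m:ℚ) + 1) - (i : ℚ))) := by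
      rw [show (Finset.Icc 2 m) = (Finset.Icc 1 (m-1)).map
          (addRightEmbedding 1) from ?_]
      · rw [Finset.prod_map]
        apply Finset.prod_congr rfl
        intro i hi
        simp only [addRightEmbedding_apply]
        push_cast
        ring
      · rw [Finset.map_add_right_Icc]
        congr 1
        omega
    have hfull : ∏ i ∈ Finset.Icc 1 ((m+1) - 1), ((i : ℚ) + x + q * (((m+1 : ℕ) : ℚ) - (i : ℚ)))
        = (x + 1 + q * m) * ∏ i ∈ Finset.Icc 2 m, ((i : ℚ) + x + q * (((m:ℚ) + 1) - (i : ℚ))) := by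
      have he : Finset.Icc 1 ((m+1) - 1) = insert 1 (Finset.Icc 2 m) := by
        ext i
        simp only [Finset.mem_Icc, Finset.mem_insert]
        omega
      rw [he, Finset.prod_insert (by simp [Finset.mem_Icc])]
      push_cast
      have hgoal : ∀ i ∈ Finset.Icc 2 m, ((i : ℚ) + x + q * ((m:ℚ) + 1 - (i : ℚ)))
          = ((i : ℚ) + x + q * (((m:ℚ) + 1) - (i : ℚ))) := fun i _ => rfl
      congr 1 <;> try ring
    rw [hre] at hrec
    rw [hfull]
    apply mul_left_cancel₀ hne
    rw [hrec]
    ring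

/-! ### relating André trees to single-root forests -/

lemma andre_eq_forests_filter (n : ℕ) (hn : 1 ≤ n) :
    andreTrees n = (forests n).filter (fun p => (rootsF p).card = 1) := by
  obtain ⟨m, rfl⟩ : ∃ m, n = m + 1 := ⟨n - 1, by omega⟩
  ext p
  simp only [andreTrees, forests, Finset.mem_filter, Finset.mem_univ, true_and]
  constructor
  · rintro ⟨h1, h2, h3⟩
    have hfix : p (Fin.last m) = Fin.last m := by
      apply h2
      simp
    have hroots : rootsF p = {Fin.last m} := by
      apply Finset.eq_singleton_iff_unique_mem.mpr
      refine ⟨Finset.mem_filter.mpr ⟨Finset.mem_univ _, hfix⟩, ?_⟩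
      intro i hi
      have hifix : p i = i := (Finset.mem_filter.mp hi).2
      by_contra hne
      have hlt : (i : ℕ) + 1 < m + 1 := by
        have := i.isLt
        have : (i : ℕ) ≠ m := fun he => hne (Fin.ext (by simp [he]))
        omega
      have := h1 i hlt
      rw [hifix] at this
      omega
    refine ⟨⟨?_, ?_⟩, ?_⟩
    · intro i
      by_cases hlt : (i : ℕ) + 1 < m + 1
      · exact le_of_lt (h1 i hlt)
      · rw [h2 i hlt]
    · intro j
      refine le_trans (Finset.card_le_card ?_) (h3 j)
      intro i hi
      obtain ⟨_, hpi, hne⟩ := Finset.mem_filter.mp hi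
      refine Finset.mem_filter.mpr ⟨Finset.mem_univ _, ?_, hpi⟩
      by_contra hge
      rw [h2 i hge] at hpi
      exact hne hpi
    · rw [hroots, Finset.card_singleton]
  · rintro ⟨⟨h1, h2⟩, hcard⟩
    have hfix : p (Fin.last m) = Fin.last m := by
      apply Fin.ext
      have := h1 (Fin.last m)
      have h2' : (p (Fin.last m) : ℕ) ≤ m := Nat.lt_succ_iff.mp (p (Fin.last m)).isLt
      simp only [Fin.val_last] at *
      omega
    have hroots : rootsF p = {Fin.last m} := by
      obtain ⟨a, ha⟩ := Finset.card_eq_one.mp hcard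
      have hlast : Fin.last m ∈ rootsF p := Finset.mem_filter.mpr ⟨Finset.mem_univ _, hfix⟩
      rw [ha] at hlast ⊢
      rw [Finset.mem_singleton.mp hlast]
    refine ⟨?_, ?_, ?_⟩
    · intro i hlt
      have hne : p i ≠ i := by
        intro hfixi
        have : i ∈ rootsF p := Finset.mem_filter.mpr ⟨Finset.mem_univ _, hfixi⟩
        rw [hroots, Finset.mem_singleton] at this
        subst this
        simp at hlt
      exact lt_of_le_of_ne (h1 i) (fun he => hne (Fin.ext he.symm))
    · intro i hge
      have : i = Fin.last m := by
        apply Fin.ext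
        have := i.isLt
        simp only [Fin.val_last]
        omega
      rw [this, hfix]
    · intro j
      refine le_trans (Finset.card_le_card ?_) (h2 j)
      intro i hi
      obtain ⟨_, hlt, hpi⟩ := Finset.mem_filter.mp hi
      refine Finset.mem_filter.mpr ⟨Finset.mem_univ _, hpi, ?_⟩
      intro he
      subst he
      have : i ∈ rootsF p := Finset.mem_filter.mpr ⟨Finset.mem_univ _, hpi⟩
      rw [hroots, Finset.mem_singleton] at this
      subst this
      simp at hlt

lemma psi_at_one (q : ℚ) (n : ℕ) (hn : 1 ≤ n) :
    Psi q n 1 = ∑ p ∈ andreTrees n, Wt q n p := by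
  rw [andre_eq_forests_filter n hn, Finset.sum_filter, Psi]
  apply Finset.sum_congr rfl
  intro p hp
  have h1 : 1 ≤ (rootsF p).card := roots_nonempty hn hp
  rcases Nat.lt_or_ge (rootsF p).card 2 with hlt | hge
  · have : (rootsF p).card = 1 := by omega
    rw [this]
    norm_num [ff_succ, ff_zero]
  · obtain ⟨k, hk⟩ : ∃ k, (rootsF p).card = k + 2 := ⟨(rootsF p).card - 2, by omega⟩
    rw [hk, if_neg (by omega), ff_one_ge_two, mul_zero]

end

end Stmt3

theorem stmt3 (n : ℕ) (hn : 1 ≤ n) (q : ℚ) :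
    ∏ i ∈ Finset.Icc 1 (n - 1), ((i : ℚ) + 1 + q * ((n : ℚ) - (i : ℚ)))
      = ∑ p ∈ andreTrees n, ∏ v ∈ internalsA n p,
          (2 + q * ((hookA n p v : ℚ) - 1)) := by
  have h1 := Stmt3.main_closed q n hn 1 one_pos
  have h2 := Stmt3.psi_at_one q n hn
  rw [h2, one_mul] at h1
  rw [← h1]
  rfl
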